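/- Consider the Markov chain on ℤ ∪ {Δ} which from state 0 moves to Δ with probability 1/2 and otherwise moves to ±1 with probability 1/4 each, and from any x ≠ 0 moves to x±1 with probability 1/2 each (Δ is absorbing). For integers b₋, b₊ ≥ 1 and R ≥ 1, let E_R be the event that the chain started at 0 reaches b₊R or −b₋R before reaching Δ. Then the conditional probability that the first step is to +1, given E_R, equals 1/4 + b₋/(2(b₊+b₋)). -/

import Mathlib

open scoped BigOperators Classical

namespace KRW1d

/-- Killing function `k(x) = (1/2)·1_{x=0}` on `ℤ`. -/
noncomputable def kill (x : ℤ) : ℝ := if x = 0 then 1 / 2 else 0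

def IsNbr (x y : ℤ) : Prop := |x - y| = 1

/-- One-step weight of the killed walk on `ℤ`: survive at `x` (prob `1-k(x)`) and step to a
uniformly chosen neighbour. -/
noncomputable def stepWt (x y : ℤ) : ℝ := if IsNbr x y then (1 - kill x) / 2 else 0

noncomputable def pathWt (n : ℕ) (γ : Fin (n + 1) → ℤ) : ℝ :=
  ∏ i : Fin n, stepWt (γ i.castSucc) (γ i.succ)

/-- `P_x[τ(Λᶜ) < τ(Δ)]`: probability that the killed walk started at `x` leaves `Λ`
before being killed (sum of killed-walk weights over paths staying in `Λ` until the
final vertex, which lies outside `Λ`). -/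
noncomputable def exitProb (Λ : Set ℤ) (x : ℤ) : ℝ :=
  ∑' n : ℕ, ∑' γ : Fin (n + 1) → ℤ,
    if γ 0 = x ∧ (∀ i : Fin n, γ i.castSucc ∈ Λ) ∧ γ (Fin.last n) ∉ Λ then pathWt n γ else 0

/-! ### Auxiliary development -/

/-- recursive exit-probability-by-time-n function -/
noncomputable def hitFn (Λ : Set ℤ) : ℕ → ℤ → ℝ
  | 0, x => if x ∈ Λ then 0 else 1
  | n+1, x => if x ∈ Λ then (1 - kill x) / 2 * (hitFn Λ n (x-1) + hitFn Λ n (x+1)) else 0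

lemma isNbr_iff {x y : ℤ} : IsNbr x y ↔ y = x - 1 ∨ y = x + 1 := by
  unfold IsNbr
  rw [abs_eq (by norm_num : (0:ℤ) ≤ 1)]
  omega

lemma pathWt_nbrs {n : ℕ} {γ : Fin (n+1) → ℤ} (h : pathWt n γ ≠ 0) (i : Fin n) :
    IsNbr (γ i.castSucc) (γ i.succ) := by
  by_contra hc
  exact h (Finset.prod_eq_zero (Finset.mem_univ i) (by simp [stepWt, hc]))

lemma pathWt_confined {n : ℕ} {γ : Fin (n+1) → ℤ} (h : pathWt n γ ≠ 0) (j : Fin (n+1)) :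
    γ j ∈ Finset.Icc (γ 0 - n) (γ 0 + n) := by
  have key : ∀ m : ℕ, ∀ hm : m < n + 1, |γ ⟨m, hm⟩ - γ 0| ≤ (m : ℤ) := by
    intro m
    induction m with
    | zero => intro hm; simp [show (⟨0, hm⟩ : Fin (n+1)) = 0 from rfl]
    | succ k ih =>
      intro hm
      have hk : k < n := by omega
      have h1 := pathWt_nbrs h ⟨k, hk⟩
      have hc : (⟨k, hk⟩ : Fin n).castSucc = ⟨k, by omega⟩ := rfl
      have hs : (⟨k, hk⟩ : Fin n).succ = ⟨k+1, hm⟩ := rfl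
      rw [hc, hs] at h1
      have h2 := ih (by omega)
      have h3 : |γ ⟨k, by omega⟩ - γ ⟨k+1, hm⟩| = 1 := h1
      have := abs_sub_le (γ ⟨k+1, hm⟩) (γ ⟨k, by omega⟩) (γ 0)
      rw [abs_sub_comm] at h3
      push_cast
      omega
  have hj := key j.1 j.2
  have hjn : (j : ℤ) ≤ (n : ℤ) := by exact_mod_cast Nat.lt_succ_iff.mp j.2
  rw [Finset.mem_Icc]
  have : (⟨j.1, j.2⟩ : Fin (n+1)) = j := rfl
  rw [this] at hj
  rw [abs_le] at hj
  omega

lemma summable_ite_mul_pathWt {n : ℕ} (y : ℤ) (C : (Fin (n+1) → ℤ) → Prop) [∀ γ, Decidable (C γ)] :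
    Summable (fun δ : Fin (n+1) → ℤ => if C δ then stepWt y (δ 0) * pathWt n δ else 0) := by
  apply summable_of_ne_finset_zero
    (s := Fintype.piFinset (fun _ : Fin (n+1) => Finset.Icc (y - 1 - n) (y + 1 + n)))
  intro δ hδ
  by_contra hne
  have hCδ : C δ := by by_contra hc; simp [hc] at hne
  rw [if_pos hCδ] at hne
  have hs : stepWt y (δ 0) ≠ 0 := fun h => hne (by rw [h, zero_mul])
  have hp : pathWt n δ ≠ 0 := fun h => hne (by rw [h, mul_zero])
  have hnb : IsNbr y (δ 0) := by by_contra hc; exact hs (by simp [stepWt, hc])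
  rw [isNbr_iff] at hnb
  apply hδ
  rw [Fintype.mem_piFinset]
  intro j
  have := pathWt_confined hp j
  rw [Finset.mem_Icc] at this ⊢
  omega

lemma summable_ite_pathWt {n : ℕ} (x : ℤ) (C : (Fin (n+1) → ℤ) → Prop) [∀ γ, Decidable (C γ)]
    (hC : ∀ γ, C γ → γ 0 = x) :
    Summable (fun γ : Fin (n+1) → ℤ => if C γ then pathWt n γ else 0) := by
  apply summable_of_ne_finset_zero
    (s := Fintype.piFinset (fun _ : Fin (n+1) => Finset.Icc (x - n) (x + n)))
  intro γ hγ
  by_contra hne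
  have hCγ : C γ := by by_contra hc; simp [hc] at hne
  have hp : pathWt n γ ≠ 0 := by
    intro h0; rw [if_pos hCγ, h0] at hne; exact hne rfl
  apply hγ
  rw [Fintype.mem_piFinset]
  intro j
  have := pathWt_confined hp j
  rwa [hC γ hCγ] at this

set_option maxHeartbeats 2000000 in
lemma inner_eq (Λ : Set ℤ) : ∀ (n : ℕ) (x : ℤ),
    (∑' γ : Fin (n + 1) → ℤ,
      if γ 0 = x ∧ (∀ i : Fin n, γ i.castSucc ∈ Λ) ∧ γ (Fin.last n) ∉ Λ then pathWt n γ else 0)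
      = hitFn Λ n x := by
  intro n
  induction n with
  | zero =>
    intro x
    rw [← (Equiv.funUnique (Fin 1) ℤ).symm.tsum_eq]
    have he : ∀ y : ℤ, (Equiv.funUnique (Fin 1) ℤ).symm y = fun _ => y :=
      fun y => funext fun i => rfl
    simp only [he]
    by_cases hx : x ∈ Λ
    · rw [hitFn, if_pos hx]
      convert tsum_zero with y
      have : ¬((fun _ : Fin 1 => y) 0 = x ∧ (∀ i : Fin 0, (fun _ : Fin 1 => y) i.castSucc ∈ Λ)
          ∧ (fun _ : Fin 1 => y) (Fin.last 0) ∉ Λ) := by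
        rintro ⟨h1, _, h3⟩; exact h3 (h1 ▸ hx)
      rw [if_neg this]
    · rw [hitFn, if_neg hx]
      have : ∀ y : ℤ, (if (fun _ : Fin 1 => y) 0 = x ∧ (∀ i : Fin 0, (fun _ : Fin 1 => y) i.castSucc ∈ Λ)
          ∧ (fun _ : Fin 1 => y) (Fin.last 0) ∉ Λ then pathWt 0 (fun _ => y) else 0)
          = if y = x then 1 else 0 := by
        intro y
        by_cases hy : y = x
        · subst hy
          rw [if_pos ⟨rfl, fun i => i.elim0, hx⟩, if_pos rfl]
          simp [pathWt]
        · rw [if_neg (by rintro ⟨h1, -⟩; exact hy h1), if_neg hy]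
      rw [tsum_congr this, tsum_ite_eq]
  | succ n ih =>
    intro x
    set F : (Fin (n+2) → ℤ) → ℝ := fun γ =>
      if γ 0 = x ∧ (∀ i : Fin (n+1), γ i.castSucc ∈ Λ) ∧ γ (Fin.last (n+1)) ∉ Λ
      then pathWt (n+1) γ else 0 with hF
    have hFsum : Summable F := by
      rw [hF]
      exact summable_ite_pathWt x (fun γ : Fin (n+2) → ℤ =>
        γ 0 = x ∧ (∀ i : Fin (n+1), γ i.castSucc ∈ Λ) ∧ γ (Fin.last (n+1)) ∉ Λ)
        (fun γ h => h.1)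
    set e := Fin.consEquiv (fun _ : Fin (n+2) => ℤ) with he
    set G : ℤ × (Fin (n+1) → ℤ) → ℝ := fun p =>
      if p.1 = x ∧ p.1 ∈ Λ ∧ (∀ i : Fin n, p.2 i.castSucc ∈ Λ) ∧ p.2 (Fin.last n) ∉ Λ
      then stepWt p.1 (p.2 0) * pathWt n p.2 else 0 with hG
    have hcons : ∀ (y : ℤ) (δ : Fin (n+1) → ℤ), e (y, δ) = Fin.cons y δ := fun y δ => rfl
    have hFe : ∀ p : ℤ × (Fin (n+1) → ℤ), F (e p) = G p := by
      rintro ⟨y, δ⟩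
      rw [hcons]
      have hval : pathWt (n+1) (Fin.cons y δ) = stepWt y (δ 0) * pathWt n δ := by
        simp only [pathWt, Fin.prod_univ_succ, Fin.castSucc_zero, Fin.cons_zero,
          Fin.cons_succ, ← Fin.succ_castSucc]
      have hcond : ((Fin.cons y δ : Fin (n+2) → ℤ) 0 = x
            ∧ (∀ i : Fin (n+1), (Fin.cons y δ : Fin (n+2) → ℤ) i.castSucc ∈ Λ)
            ∧ (Fin.cons y δ : Fin (n+2) → ℤ) (Fin.last (n+1)) ∉ Λ)
          ↔ (y = x ∧ y ∈ Λ ∧ (∀ i : Fin n, δ i.castSucc ∈ Λ) ∧ δ (Fin.last n) ∉ Λ) := by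
        rw [Fin.forall_fin_succ, ← Fin.succ_last]
        simp only [Fin.castSucc_zero, Fin.cons_zero, Fin.cons_succ]
        constructor
        · rintro ⟨h1, ⟨h2, h3⟩, h4⟩
          refine ⟨h1, h2, fun i => ?_, h4⟩
          have := h3 i
          rwa [← Fin.succ_castSucc, Fin.cons_succ] at this
        · rintro ⟨h1, h2, h3, h4⟩
          refine ⟨h1, ⟨h2, fun i => ?_⟩, h4⟩
          rw [← Fin.succ_castSucc, Fin.cons_succ]
          exact h3 i
      simp only [hF, hG, hval]
      by_cases hc : y = x ∧ y ∈ Λ ∧ (∀ i : Fin n, δ i.castSucc ∈ Λ) ∧ δ (Fin.last n) ∉ Λ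
      · rw [if_pos (hcond.mpr hc), if_pos hc]
      · rw [if_neg (fun h => hc (hcond.mp h)), if_neg hc]
    have hGsum : Summable G := (e.summable_iff.mpr hFsum).congr hFe
    calc ∑' γ : Fin (n+2) → ℤ, F γ
        = ∑' p : ℤ × (Fin (n+1) → ℤ), F (e p) := (e.tsum_eq F).symm
      _ = ∑' p : ℤ × (Fin (n+1) → ℤ), G p := tsum_congr hFe
      _ = ∑' y : ℤ, ∑' δ : Fin (n+1) → ℤ, G (y, δ) :=
          hGsum.tsum_prod' (fun y => hGsum.prod_factor y)
      _ = hitFn Λ (n+1) x := by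
          rw [tsum_eq_single x]
          · by_cases hx : x ∈ Λ
            · have hsplit : ∀ δ : Fin (n+1) → ℤ, G (x, δ)
                  = (1 - kill x)/2 *
                    ((if δ 0 = x - 1 ∧ (∀ i : Fin n, δ i.castSucc ∈ Λ) ∧ δ (Fin.last n) ∉ Λ
                        then pathWt n δ else 0)
                    + (if δ 0 = x + 1 ∧ (∀ i : Fin n, δ i.castSucc ∈ Λ) ∧ δ (Fin.last n) ∉ Λ
                        then pathWt n δ else 0)) := by
                intro δ
                simp only [hG]
                by_cases hc : (∀ i : Fin n, δ i.castSucc ∈ Λ) ∧ δ (Fin.last n) ∉ Λ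
                · rw [if_pos ⟨trivial, hx, hc⟩]
                  by_cases h1 : δ 0 = x - 1
                  · rw [if_pos ⟨h1, hc⟩, if_neg (by rintro ⟨h2, -⟩; omega)]
                    rw [stepWt, if_pos (isNbr_iff.mpr (Or.inl h1))]
                    ring
                  · by_cases h2 : δ 0 = x + 1
                    · rw [if_neg (by rintro ⟨h1', -⟩; omega), if_pos ⟨h2, hc⟩]
                      rw [stepWt, if_pos (isNbr_iff.mpr (Or.inr h2))]
                      ring
                    · rw [if_neg (by rintro ⟨h1', -⟩; omega),
                        if_neg (by rintro ⟨h2', -⟩; omega)]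
                      rw [stepWt, if_neg (by rw [isNbr_iff]; omega)]
                      ring
                · rw [if_neg (by rintro ⟨-, -, hc'⟩; exact hc hc'),
                    if_neg (by rintro ⟨-, hc'⟩; exact hc hc'),
                    if_neg (by rintro ⟨-, hc'⟩; exact hc hc')]
                  ring
              have hA : Summable (fun δ : Fin (n+1) → ℤ =>
                  if δ 0 = x - 1 ∧ (∀ i : Fin n, δ i.castSucc ∈ Λ) ∧ δ (Fin.last n) ∉ Λ
                  then pathWt n δ else 0) :=
                summable_ite_pathWt (x-1) _ (fun γ h => h.1)
              have hB : Summable (fun δ : Fin (n+1) → ℤ =>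
                  if δ 0 = x + 1 ∧ (∀ i : Fin n, δ i.castSucc ∈ Λ) ∧ δ (Fin.last n) ∉ Λ
                  then pathWt n δ else 0) :=
                summable_ite_pathWt (x+1) _ (fun γ h => h.1)
              have h4 : (∑' δ : Fin (n+1) → ℤ,
                  ((if δ 0 = x - 1 ∧ (∀ i : Fin n, δ i.castSucc ∈ Λ) ∧ δ (Fin.last n) ∉ Λ
                    then pathWt n δ else 0)
                  + (if δ 0 = x + 1 ∧ (∀ i : Fin n, δ i.castSucc ∈ Λ) ∧ δ (Fin.last n) ∉ Λ
                    then pathWt n δ else 0)))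
                  = hitFn Λ n (x-1) + hitFn Λ n (x+1) := by
                rw [hA.tsum_add hB, ih (x-1), ih (x+1)]
              rw [tsum_congr hsplit, tsum_mul_left, h4]
              simp only [hitFn]
              rw [if_pos hx]
            · have : ∀ δ : Fin (n+1) → ℤ, G (x, δ) = 0 := by
                intro δ
                simp only [hG]
                rw [if_neg (by rintro ⟨-, h2, -⟩; exact hx h2)]
              rw [tsum_congr this, tsum_zero, hitFn, if_neg hx]
          · intro y hy
            have : ∀ δ : Fin (n+1) → ℤ, G (y, δ) = 0 := by
              intro δ
              simp only [hG]
              rw [if_neg (by rintro ⟨h1, -⟩; exact hy h1)]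
            rw [tsum_congr this, tsum_zero]


lemma exitProb_eq (Λ : Set ℤ) (x : ℤ) : exitProb Λ x = ∑' n, hitFn Λ n x :=
  tsum_congr (fun n => inner_eq Λ n x)

lemma kill_nonneg (x : ℤ) : 0 ≤ kill x := by unfold kill; split_ifs <;> norm_num

lemma kill_le (x : ℤ) : kill x ≤ 1/2 := by unfold kill; split_ifs <;> norm_num

lemma hitFn_nonneg (Λ : Set ℤ) : ∀ n x, 0 ≤ hitFn Λ n x := by
  intro n
  induction n with
  | zero => intro x; rw [hitFn]; split_ifs <;> norm_num
  | succ n ih =>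
    intro x
    rw [hitFn]
    split_ifs
    · have h1 := ih (x-1); have h2 := ih (x+1); have := kill_le x
      nlinarith
    · exact le_refl 0

lemma sum_hitFn_le (Λ : Set ℤ) : ∀ N x, ∑ n ∈ Finset.range N, hitFn Λ n x ≤ 1 := by
  intro N
  induction N with
  | zero => intro x; simp
  | succ N ih =>
    intro x
    rw [Finset.sum_range_succ']
    by_cases hx : x ∈ Λ
    · have hterm : ∀ n, hitFn Λ (n+1) x
          = (1 - kill x) / 2 * (hitFn Λ n (x-1) + hitFn Λ n (x+1)) := by
        intro n; rw [hitFn, if_pos hx]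
      have h0 : hitFn Λ 0 x = 0 := by rw [hitFn, if_pos hx]
      rw [h0, add_zero]
      calc ∑ n ∈ Finset.range N, hitFn Λ (n+1) x
          = (1 - kill x) / 2 *
            ((∑ n ∈ Finset.range N, hitFn Λ n (x-1))
              + ∑ n ∈ Finset.range N, hitFn Λ n (x+1)) := by
            simp only [hterm]
            rw [← Finset.mul_sum, Finset.sum_add_distrib]
        _ ≤ 1 := by
            have h1 := ih (x-1); have h2 := ih (x+1)
            have h3 := kill_nonneg x
            have h4 : ∀ y, (0:ℝ) ≤ ∑ n ∈ Finset.range N, hitFn Λ n y :=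
              fun y => Finset.sum_nonneg (fun n _ => hitFn_nonneg Λ n y)
            nlinarith [h4 (x-1), h4 (x+1), kill_le x]
    · have h0 : hitFn Λ 0 x = 1 := by rw [hitFn, if_neg hx]
      have hterm : ∀ n, hitFn Λ (n+1) x = 0 := by
        intro n; rw [hitFn, if_neg hx]
      simp [hterm, h0]

lemma hitFn_summable (Λ : Set ℤ) (x : ℤ) : Summable (fun n => hitFn Λ n x) :=
  summable_of_sum_range_le (fun n => hitFn_nonneg Λ n x) (fun N => sum_hitFn_le Λ N x)

lemma exitProb_outside {Λ : Set ℤ} {x : ℤ} (hx : x ∉ Λ) : exitProb Λ x = 1 := by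
  rw [exitProb_eq, (hitFn_summable Λ x).tsum_eq_zero_add]
  have h0 : hitFn Λ 0 x = 1 := by rw [hitFn, if_neg hx]
  have hterm : ∀ n : ℕ, hitFn Λ (n+1) x = 0 := fun n => by rw [hitFn, if_neg hx]
  simp [h0, hterm]

lemma exitProb_harmonic {Λ : Set ℤ} {x : ℤ} (hx : x ∈ Λ) :
    exitProb Λ x = (1 - kill x) / 2 * (exitProb Λ (x-1) + exitProb Λ (x+1)) := by
  rw [exitProb_eq, exitProb_eq, exitProb_eq, (hitFn_summable Λ x).tsum_eq_zero_add]
  have h0 : hitFn Λ 0 x = 0 := by rw [hitFn, if_pos hx]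
  have hterm : ∀ n : ℕ, hitFn Λ (n+1) x
      = (1 - kill x) / 2 * (hitFn Λ n (x-1) + hitFn Λ n (x+1)) := by
    intro n; rw [hitFn, if_pos hx]
  rw [h0, zero_add, tsum_congr hterm, tsum_mul_left,
    (hitFn_summable Λ (x-1)).tsum_add (hitFn_summable Λ (x+1))]

/-- two-step linear recursion gives a linear function -/
lemma two_step (f : ℕ → ℝ) (b : ℤ)
    (hrec : ∀ k : ℕ, (k:ℤ) + 2 ≤ b → f (k+2) = 2 * f (k+1) - f k) :
    ∀ k : ℕ, (k:ℤ) ≤ b → f k = f 0 + k * (f 1 - f 0) := by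
  intro k
  induction k using Nat.strong_induction_on with
  | _ k ih =>
    match k with
    | 0 => intro _; simp
    | 1 => intro _; push_cast; ring
    | (j+2) =>
      intro hb
      have hj2 : (j:ℤ) + 2 ≤ b := by push_cast at hb; omega
      have h1 := ih (j+1) (by omega) (by push_cast; omega)
      have h0 := ih j (by omega) (by push_cast; omega)
      have hr := hrec j hj2
      rw [hr, h1, h0]
      push_cast
      ring

/-- Gambler's ruin, Remark 1.1. For the walk on `ℤ` killed at the origin with
probability `1/2`, conditioned on reaching `b₊R` or `-b₋R` before dying (i.e. on exiting the open
interval `(-b₋R, b₊R)` before `Δ`), the probability that the first step is to `+1` equals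
`1/4 + b₋/(2(b₊+b₋))`.  The numerator `P₀[S₁ = 1 ∧ E_R]` is `(1-k(0))/2 = 1/4` times the exit
probability from `1`. -/
theorem gamblers_ruin_conditioned_first_step (bm bp R : ℤ)
    (hbm : 1 ≤ bm) (hbp : 1 ≤ bp) (hR : 1 ≤ R) :
    (1 / 4 * exitProb (Set.Ioo (-(bm * R)) (bp * R)) 1) /
        exitProb (Set.Ioo (-(bm * R)) (bp * R)) 0
      = 1 / 4 + (bm : ℝ) / (2 * ((bp : ℝ) + (bm : ℝ))) := by
  set p : ℤ := bp * R with hp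
  set m : ℤ := bm * R with hm
  have hp1 : 1 ≤ p := by nlinarith
  have hm1 : 1 ≤ m := by nlinarith
  set Λ : Set ℤ := Set.Ioo (-m) p with hΛ
  set E : ℤ → ℝ := exitProb Λ with hE
  -- harmonicity away from 0
  have hharm : ∀ x : ℤ, x ∈ Λ → x ≠ 0 → E (x+1) = 2 * E x - E (x-1) := by
    intro x hx hx0
    have h := exitProb_harmonic (Λ := Λ) hx
    have hk : kill x = 0 := by rw [kill, if_neg hx0]
    rw [hk] at h
    have : E x = 1/2 * (E (x-1) + E (x+1)) := by rw [hE]; convert h using 2; norm_num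
    linarith
  -- linearity on the right
  have claim_r : ∀ k : ℕ, (k:ℤ) ≤ p → E (k:ℤ) = E 0 + (k:ℝ) * (E 1 - E 0) := by
    have := two_step (fun k : ℕ => E (k:ℤ)) p ?_
    · intro k hk
      have h := this k hk
      simpa using h
    · intro k hk
      have hx : ((k:ℤ)+1) ∈ Λ := by
        rw [hΛ]; constructor
        · omega
        · omega
      have h := hharm ((k:ℤ)+1) hx (by omega)
      have e1 : ((k:ℤ)+1+1) = ((k+2 : ℕ) : ℤ) := by push_cast; ring
      have e2 : ((k:ℤ)+1-1) = ((k : ℕ) : ℤ) := by push_cast; ring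
      have e3 : ((k:ℤ)+1) = ((k+1 : ℕ) : ℤ) := by push_cast; ring
      rw [e1, e2, e3] at h
      simpa using h
  -- linearity on the left
  have claim_l : ∀ k : ℕ, (k:ℤ) ≤ m → E (-(k:ℤ)) = E 0 + (k:ℝ) * (E (-1) - E 0) := by
    have := two_step (fun k : ℕ => E (-(k:ℤ))) m ?_
    · intro k hk
      have h := this k hk
      simpa using h
    · intro k hk
      have hx : (-((k:ℤ)+1)) ∈ Λ := by
        rw [hΛ]; constructor
        · omega
        · omega
      have h := hharm (-((k:ℤ)+1)) hx (by omega)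
      have e1 : (-((k:ℤ)+1)+1) = -((k : ℕ) : ℤ) := by push_cast; ring
      have e2 : (-((k:ℤ)+1)-1) = -((k+2 : ℕ) : ℤ) := by push_cast; ring
      have e3 : (-((k:ℤ)+1)) = -((k+1 : ℕ) : ℤ) := by push_cast; ring
      rw [e1, e2, e3] at h
      have : E (-((k:ℕ):ℤ)) = 2 * E (-((k+1:ℕ):ℤ)) - E (-((k+2:ℕ):ℤ)) := by
        push_cast at h ⊢; linarith
      push_cast at this ⊢
      linarith
  -- boundary values
  have hEp : E p = 1 := by
    rw [hE]
    apply exitProb_outside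
    rw [hΛ]
    intro hmem
    exact absurd hmem.2 (lt_irrefl p)
  have hEm : E (-m) = 1 := by
    rw [hE]
    apply exitProb_outside
    rw [hΛ]
    intro hmem
    exact absurd hmem.1 (lt_irrefl (-m))
  -- equation at 0
  have h0mem : (0:ℤ) ∈ Λ := by rw [hΛ]; constructor <;> omega
  have h3 : 4 * E 0 = E (-1) + E 1 := by
    have h := exitProb_harmonic (Λ := Λ) h0mem
    have hk : kill 0 = 1/2 := by rw [kill, if_pos rfl]
    rw [hk] at h
    have h0 : ((0:ℤ) - 1) = -1 := by ring
    have h1 : ((0:ℤ) + 1) = 1 := by ring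
    rw [h0, h1] at h
    rw [hE]
    linarith
  -- cast boundary equations
  have h0p : (0:ℤ) ≤ p := by omega
  have h0m : (0:ℤ) ≤ m := by omega
  have h1 : E 0 + (p:ℝ) * (E 1 - E 0) = 1 := by
    have hk := claim_r p.toNat (le_of_eq (Int.toNat_of_nonneg h0p))
    rw [Int.toNat_of_nonneg h0p] at hk
    have hc : ((p.toNat:ℕ):ℝ) = (p:ℝ) := by exact_mod_cast Int.toNat_of_nonneg h0p
    rw [hc, hEp] at hk
    exact hk.symm
  have h2 : E 0 + (m:ℝ) * (E (-1) - E 0) = 1 := by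
    have hk := claim_l m.toNat (le_of_eq (Int.toNat_of_nonneg h0m))
    rw [Int.toNat_of_nonneg h0m] at hk
    have hc : ((m.toNat:ℕ):ℝ) = (m:ℝ) := by exact_mod_cast Int.toNat_of_nonneg h0m
    rw [hc, hEm] at hk
    exact hk.symm
  -- solve the linear system
  set P : ℝ := (p:ℝ) with hP
  set M : ℝ := (m:ℝ) with hM
  have hP1 : (1:ℝ) ≤ P := by rw [hP]; exact_mod_cast hp1
  have hM1 : (1:ℝ) ≤ M := by rw [hM]; exact_mod_cast hm1
  have hD : (0:ℝ) < P + M + 2*M*P := by nlinarith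
  have hE0D : E 0 * (P + M + 2*M*P) = M + P := by
    linear_combination M*h1 + P*h2 + M*P*h3
  have hE1D : E 1 * (P + M + 2*M*P) = 3*M + P := by
    linear_combination (1+3*M)*h1 + (P-1)*h2 + (M*(P-1))*h3
  have hE0pos : 0 < E 0 := by
    have he : E 0 = (M+P)/(P+M+2*M*P) := by
      rw [eq_div_iff (ne_of_gt hD)]; linarith [hE0D]
    rw [he]
    apply div_pos (by nlinarith) hD
  have h5 : (E 1 * (M+P)) * (P+M+2*M*P) = (E 0 * (3*M+P)) * (P+M+2*M*P) := by
    linear_combination (M+P)*hE1D - (3*M+P)*hE0D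
  have hk1 : E 1 * (M+P) = E 0 * (3*M+P) := mul_right_cancel₀ (ne_of_gt hD) h5
  have hMr : M = (bm:ℝ)*(R:ℝ) := by rw [hM, hm]; push_cast; ring
  have hPr : P = (bp:ℝ)*(R:ℝ) := by rw [hP, hp]; push_cast; ring
  have hRpos : (0:ℝ) < (R:ℝ) := by exact_mod_cast (by omega : (0:ℤ) < R)
  have hkey : ((bp:ℝ)+(bm:ℝ)) * E 1 = ((bp:ℝ)+3*(bm:ℝ)) * E 0 := by
    apply mul_left_cancel₀ (ne_of_gt hRpos)
    rw [hMr, hPr] at hk1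
    linear_combination hk1
  have hbmbp : (0:ℝ) < (bp:ℝ) + (bm:ℝ) := by
    have : (1:ℝ) ≤ (bp:ℝ) := by exact_mod_cast hbp
    have : (1:ℝ) ≤ (bm:ℝ) := by exact_mod_cast hbm
    linarith
  rw [div_eq_iff (ne_of_gt hE0pos)]
  field_simp
  linear_combination 2 * hkey


end KRW1d
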